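/- Let (Ω, F, P) be a probability space, m ≥ 1, and let κ assign to each ω ∈ Ω a Borel measure κ_ω on ℝ^m such that for every open ball B = B(q,r) with rational center q and positive rational radius r: (i) the map ω ↦ κ_ω(B) is measurable; (ii) P({ω : κ_ω(B) > 0}) ∈ {0,1}; and (iii) ∫_Ω κ_ω(B) dP(ω) = λ(B), where λ is Lebesgue measure on ℝ^m. Then for P-almost every ω, the measure κ_ω has full support: every nonempty open subset of ℝ^m has positive κ_ω-measure (and consequently every Borel set of zero κ_ω-measure has dense complement). -/

import Mathlib

open MeasureTheory Metric

/-- The point of `ℝ^m` with rational coordinates `q`. -/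
noncomputable def ratCenter (m : ℕ) (q : Fin m → ℚ) : EuclideanSpace ℝ (Fin m) :=
  WithLp.toLp 2 (fun i => (q i : ℝ))

lemma exists_ratCenter_near {m : ℕ} (x : EuclideanSpace ℝ (Fin m)) {ε : ℝ} (hε : 0 < ε) :
    ∃ q : Fin m → ℚ, dist (ratCenter m q) x < ε := by
  have hδ : 0 < ε / (m + 1) := by positivity
  choose q hq using fun i => exists_rat_near (x i) hδ
  refine ⟨q, ?_⟩
  rw [EuclideanSpace.dist_eq]
  rw [Real.sqrt_lt' hε]
  calc ∑ i, dist (ratCenter m q i) (x i) ^ 2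
      ≤ ∑ _i : Fin m, (ε / (m + 1)) ^ 2 := by
        refine Finset.sum_le_sum fun i _ => ?_
        have : dist (ratCenter m q i) (x i) ≤ ε / (m + 1) := by
          rw [Real.dist_eq, ratCenter, abs_sub_comm]
          exact (hq i).le
        exact pow_le_pow_left₀ dist_nonneg this 2
    _ = m * (ε / (m + 1)) ^ 2 := by simp [Finset.sum_const, nsmul_eq_mul]
    _ < ε ^ 2 := by
        have h1 : (m : ℝ) < (m + 1) ^ 2 := by nlinarith [Nat.cast_nonneg (α := ℝ) m]
        have h2 : (0:ℝ) < (m + 1) ^ 2 := by positivity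
        rw [div_pow]
        calc (m : ℝ) * (ε ^ 2 / (m + 1) ^ 2) < (m+1)^2 * (ε ^ 2 / (m + 1) ^ 2) := by
              apply mul_lt_mul_of_pos_right h1 (by positivity)
          _ = ε ^ 2 := by field_simp

/-- Paper's Proposition 2.2 (abstract form). Let `κ` be a random Borel measure on `ℝ^m`
(`m ≥ 1`) such that, for every open ball `B` with rational center and positive rational
radius: (i) `ω ↦ κ_ω(B)` is measurable; (ii) the event `{κ_ω(B) > 0}` has probability
`0` or `1` (0–1 law); (iii) `E[κ_ω(B)]` equals the Lebesgue measure of `B` (uniform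
integrability of the defining martingale). Then almost surely `κ_ω` has full support:
every nonempty open set has positive measure, and consequently every Borel set of zero
`κ_ω`-measure has dense complement. -/
theorem ae_full_support_of_zero_one_law
    {m : ℕ} (hm : 1 ≤ m)
    {Ω : Type*} [MeasurableSpace Ω] (P : Measure Ω) [IsProbabilityMeasure P]
    (κ : Ω → Measure (EuclideanSpace ℝ (Fin m)))
    (hmeas : ∀ (q : Fin m → ℚ) (r : ℚ), 0 < r →
      Measurable fun ω => κ ω (ball (ratCenter m q) (r : ℝ)))
    (h01 : ∀ (q : Fin m → ℚ) (r : ℚ), 0 < r →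
      P {ω | 0 < κ ω (ball (ratCenter m q) (r : ℝ))} = 0 ∨
      P {ω | 0 < κ ω (ball (ratCenter m q) (r : ℝ))} = 1)
    (hmean : ∀ (q : Fin m → ℚ) (r : ℚ), 0 < r →
      ∫⁻ ω, κ ω (ball (ratCenter m q) (r : ℝ)) ∂P
        = volume (ball (ratCenter m q) (r : ℝ))) :
    ∀ᵐ ω ∂P,
      (∀ U : Set (EuclideanSpace ℝ (Fin m)), IsOpen U → U.Nonempty → 0 < κ ω U) ∧
      (∀ A : Set (EuclideanSpace ℝ (Fin m)), MeasurableSet A → κ ω A = 0 → Dense Aᶜ) := by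
  have key : ∀ (q : Fin m → ℚ) (r : ℚ), 0 < r →
      ∀ᵐ ω ∂P, 0 < κ ω (ball (ratCenter m q) (r : ℝ)) := by
    intro q r hr
    have hms : MeasurableSet {ω | 0 < κ ω (ball (ratCenter m q) (r : ℝ))} :=
      measurableSet_lt measurable_const (hmeas q r hr)
    rcases h01 q r hr with h | h
    · exfalso
      have hae : ∀ᵐ ω ∂P, κ ω (ball (ratCenter m q) (r : ℝ)) = 0 := by
        rw [ae_iff]
        convert h using 2
        ext ω
        simp [pos_iff_ne_zero]
      have : ∫⁻ ω, κ ω (ball (ratCenter m q) (r : ℝ)) ∂P = 0 := by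
        rw [lintegral_congr_ae hae, lintegral_zero]
      rw [hmean q r hr] at this
      have hrR : (0:ℝ) < (r : ℝ) := by exact_mod_cast hr
      exact (measure_ball_pos volume (ratCenter m q) hrR).ne' this
    · rw [Filter.eventually_iff, mem_ae_iff]
      have : {ω | 0 < κ ω (ball (ratCenter m q) (r : ℝ))}ᶜᶜ
          = {ω | 0 < κ ω (ball (ratCenter m q) (r : ℝ))} := compl_compl _
      rw [show ({ω | 0 < κ ω (ball (ratCenter m q) (r : ℝ))} : Set Ω)ᶜ
          = {ω | 0 < κ ω (ball (ratCenter m q) (r : ℝ))}ᶜ from rfl]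
      rw [prob_compl_eq_zero_iff hms]
      exact h
  have key' : ∀ᵐ ω ∂P, ∀ (q : Fin m → ℚ) (r : ℚ), 0 < r →
      0 < κ ω (ball (ratCenter m q) (r : ℝ)) := by
    rw [ae_all_iff]
    intro q
    rw [ae_all_iff]
    intro r
    by_cases hr : 0 < r
    · filter_upwards [key q r hr] with ω hω _ using hω
    · exact Filter.Eventually.of_forall fun ω h => absurd h hr
  filter_upwards [key'] with ω hω
  have main : ∀ U : Set (EuclideanSpace ℝ (Fin m)), IsOpen U → U.Nonempty → 0 < κ ω U := by
    intro U hU ⟨x, hx⟩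
    obtain ⟨ε, hε, hball⟩ := Metric.isOpen_iff.mp hU x hx
    obtain ⟨q, hq⟩ := exists_ratCenter_near x (half_pos hε)
    obtain ⟨r, hr1, hr2⟩ := exists_rat_btwn hq
    have hr0 : (0:ℚ) < r := by
      have : (0:ℝ) < (r:ℝ) := lt_of_le_of_lt dist_nonneg hr1
      exact_mod_cast this
    have hsub : ball (ratCenter m q) (r : ℝ) ⊆ U := by
      intro z hz
      apply hball
      rw [mem_ball] at hz ⊢
      calc dist z x ≤ dist z (ratCenter m q) + dist (ratCenter m q) x := dist_triangle _ _ _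
        _ < r + ε / 2 := add_lt_add hz hq
        _ < ε / 2 + ε / 2 := by linarith
        _ = ε := by ring
    exact lt_of_lt_of_le (hω q r hr0) (measure_mono hsub)
  refine ⟨main, fun A _ hA0 => ?_⟩
  rw [dense_iff_inter_open]
  intro U hU hUne
  by_contra h
  rw [Set.not_nonempty_iff_eq_empty] at h
  have hUA : U ⊆ A := by
    intro x hx
    by_contra hxA
    exact Set.notMem_empty x (h ▸ ⟨hx, hxA⟩)
  have := measure_mono (μ := κ ω) hUA
  rw [hA0] at this
  exact (main U hU hUne).ne' (le_antisymm this zero_le)
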